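/- For continuous functions y and μ on [0,1] with nondegenerate centered versions, the finite-dimensional shape index 1 − [Σ_j ỹ(t_j)μ̃(t_j)] / ([Σ_j ỹ(t_j)²]^{1/2}[Σ_j μ̃(t_j)²]^{1/2}) over k equidistant points converges, as k → ∞, to the shape index 1 − ⟨ỹ, μ̃⟩/(‖ỹ‖·‖μ̃‖). -/

import Mathlib

open MeasureTheory Real Filter

noncomputable def ctr (f : ℝ → ℝ) : ℝ → ℝ := fun t => f t - ∫ r in (0:ℝ)..1, f r

noncomputable def ip (f g : ℝ → ℝ) : ℝ := ∫ t in (0:ℝ)..1, f t * g t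

noncomputable def nrm (f : ℝ → ℝ) : ℝ := Real.sqrt (∫ t in (0:ℝ)..1, (f t)^2)

noncomputable def IA (μ y : ℝ → ℝ) : ℝ := ip (ctr y) (ctr μ) / (nrm (ctr μ))^2 - 1

noncomputable def IS (μ y : ℝ → ℝ) : ℝ := 1 - ip (ctr y) (ctr μ) / (nrm (ctr y) * nrm (ctr μ))

noncomputable def betaC (μ y : ℝ → ℝ) : ℝ := ip (ctr y) (ctr μ) / (nrm (ctr μ))^2

noncomputable def IM (μ y : ℝ → ℝ) : ℝ :=
  (∫ t in (0:ℝ)..1, y t) - betaC μ y * ∫ t in (0:ℝ)..1, μ t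

def memL2 (f : ℝ → ℝ) : Prop :=
  MeasureTheory.MemLp f 2 (MeasureTheory.volume.restrict (Set.Icc (0:ℝ) 1))

noncomputable def pts (k j : ℕ) : ℝ := (j : ℝ) / ((k : ℝ) - 1)

noncomputable def avgD (f : ℝ → ℝ) (k : ℕ) : ℝ := (∑ j ∈ Finset.range k, f (pts k j)) / k

noncomputable def ctrD (f : ℝ → ℝ) (k : ℕ) (j : ℕ) : ℝ := f (pts k j) - avgD f k

lemma riemann_tendsto (f : ℝ → ℝ) (hf : ContinuousOn f (Set.Icc (0:ℝ) 1)) :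
    Tendsto (fun n : ℕ => (∑ j ∈ Finset.range n, f ((j:ℝ)/(n:ℝ))) / n) atTop
      (nhds (∫ t in (0:ℝ)..1, f t)) := by
  rw [Metric.tendsto_atTop]
  intro ε hε
  obtain ⟨δ, hδ, hδ'⟩ := (Metric.uniformContinuousOn_iff.mp
    ((isCompact_Icc).uniformContinuousOn_of_continuous hf)) (ε/2) (by positivity)
  obtain ⟨N, hN⟩ := exists_nat_gt (1/δ)
  have hN0 : (0:ℝ) < N := lt_trans (by positivity) hN
  refine ⟨N+1, fun n hn => ?_⟩
  have hn0 : 0 < n := lt_of_lt_of_le (Nat.succ_pos N) hn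
  have hnR : (0:ℝ) < n := by exact_mod_cast hn0
  have hNn : (N:ℝ) < n := by exact_mod_cast lt_of_lt_of_le (Nat.lt_succ_self N) hn
  have hδn : 1/(n:ℝ) < δ := by
    rw [div_lt_iff₀ hδ] at hN
    rw [div_lt_iff₀ hnR]
    nlinarith
  set a : ℕ → ℝ := fun j => (j:ℝ)/n with ha
  have hstep : ∀ j : ℕ, a (j+1) - a j = 1/n := by
    intro j; simp only [ha]; push_cast; field_simp; ring
  have hle : ∀ j : ℕ, a j ≤ a (j+1) := by
    intro j; have := hstep j; nlinarith [one_div_pos.mpr hnR]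
  have hmem : ∀ j ≤ n, a j ∈ Set.Icc (0:ℝ) 1 := by
    intro j hj
    refine ⟨by positivity, ?_⟩
    rw [div_le_one hnR]; exact_mod_cast hj
  have hsub : ∀ j < n, Set.uIcc (a j) (a (j+1)) ⊆ Set.Icc (0:ℝ) 1 := by
    intro j hj
    rw [Set.uIcc_of_le (hle j)]
    exact Set.Icc_subset_Icc (hmem j hj.le).1 (hmem (j+1) hj).2
  have hint : ∀ j < n, IntervalIntegrable f volume (a j) (a (j+1)) := by
    intro j hj
    exact (hf.mono (hsub j hj)).intervalIntegrable
  have hsplit : ∫ t in (0:ℝ)..1, f t = ∑ j ∈ Finset.range n, ∫ t in (a j)..(a (j+1)), f t := by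
    rw [intervalIntegral.sum_integral_adjacent_intervals hint]
    norm_num [ha, div_self hnR.ne']
  have hconst : (∑ j ∈ Finset.range n, f ((j:ℝ)/(n:ℝ))) / n
      = ∑ j ∈ Finset.range n, ∫ _ in (a j)..(a (j+1)), f (a j) := by
    rw [Finset.sum_div]
    refine Finset.sum_congr rfl fun j _ => ?_
    rw [intervalIntegral.integral_const, hstep j, smul_eq_mul]
    ring
  rw [Real.dist_eq, hconst, hsplit, ← Finset.sum_sub_distrib]
  have hbound : ∀ j ∈ Finset.range n,
      |(∫ _ in (a j)..(a (j+1)), f (a j)) - ∫ t in (a j)..(a (j+1)), f t| ≤ (ε/2) * (1/n) := by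
    intro j hj
    rw [Finset.mem_range] at hj
    rw [← intervalIntegral.integral_sub intervalIntegrable_const (hint j hj)]
    have hptwise : ∀ t ∈ Set.uIoc (a j) (a (j+1)), ‖f (a j) - f t‖ ≤ ε/2 := by
      intro t ht
      rw [Set.uIoc_of_le (hle j)] at ht
      have htmem : t ∈ Set.Icc (0:ℝ) 1 :=
        hsub j hj (by rw [Set.uIcc_of_le (hle j)]; exact Set.Ioc_subset_Icc_self ht)
      have hd : dist (a j) t < δ := by
        rw [Real.dist_eq, abs_of_nonpos (by linarith [ht.1.le])]
        have h2 := hstep j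
        have h3 := ht.2
        linarith
      have hh := hδ' (a j) (hmem j hj.le) t htmem hd
      rw [Real.dist_eq] at hh
      rw [Real.norm_eq_abs]
      exact hh.le
    have hb := intervalIntegral.norm_integral_le_of_norm_le_const (C := ε/2)
      (f := fun t => f (a j) - f t) hptwise
    rw [Real.norm_eq_abs, hstep j, abs_of_pos (one_div_pos.mpr hnR)] at hb
    exact hb
  calc |∑ j ∈ Finset.range n, ((∫ _ in (a j)..(a (j+1)), f (a j)) - ∫ t in (a j)..(a (j+1)), f t)|
      ≤ ∑ j ∈ Finset.range n, |(∫ _ in (a j)..(a (j+1)), f (a j)) - ∫ t in (a j)..(a (j+1)), f t| :=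
        Finset.abs_sum_le_sum_abs _ _
    _ ≤ ∑ _j ∈ Finset.range n, (ε/2) * (1/n) := Finset.sum_le_sum hbound
    _ = ε/2 := by rw [Finset.sum_const, Finset.card_range]; field_simp; ring; exact mul_inv_cancel_right₀ hnR.ne' ε
    _ < ε := by linarith

lemma avgD_tendsto (f : ℝ → ℝ) (hf : ContinuousOn f (Set.Icc (0:ℝ) 1)) :
    Tendsto (fun k => avgD f k) atTop (nhds (∫ t in (0:ℝ)..1, f t)) := by
  rw [← tendsto_add_atTop_iff_nat 1]
  have h1 : Tendsto (fun n : ℕ => ((n:ℝ)/((n:ℝ)+1)) *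
        ((∑ j ∈ Finset.range n, f ((j:ℝ)/(n:ℝ)))/n) + f 1 * (1/((n:ℝ)+1)))
      atTop (nhds (1 * (∫ t in (0:ℝ)..1, f t) + f 1 * 0)) :=
    ((tendsto_natCast_div_add_atTop (1:ℝ)).mul (riemann_tendsto f hf)).add
      (tendsto_const_nhds.mul tendsto_one_div_add_atTop_nhds_zero_nat)
  rw [one_mul, mul_zero, add_zero] at h1
  apply h1.congr'
  filter_upwards [eventually_ge_atTop 1] with n hn
  have hnR : (0:ℝ) < n := by exact_mod_cast hn
  have hpts : ∀ j : ℕ, pts (n+1) j = (j:ℝ)/n := by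
    intro j; unfold pts; push_cast; ring_nf
  have hlast : pts (n+1) n = 1 := by rw [hpts]; exact div_self hnR.ne'
  unfold avgD
  rw [Finset.sum_range_succ, hlast]
  simp only [hpts]
  push_cast
  field_simp

lemma sum_ctrD_mul (f g : ℝ → ℝ) (k : ℕ) (hk : 1 ≤ k) :
    (∑ j ∈ Finset.range k, ctrD f k j * ctrD g k j) / (k:ℝ)
      = avgD (fun t => f t * g t) k - avgD f k * avgD g k := by
  have hkR : (0:ℝ) < k := by exact_mod_cast hk
  have hA : ∑ j ∈ Finset.range k, f (pts k j) = k * avgD f k := by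
    unfold avgD; field_simp
  have hB : ∑ j ∈ Finset.range k, g (pts k j) = k * avgD g k := by
    unfold avgD; field_simp
  have expand : ∀ j : ℕ, ctrD f k j * ctrD g k j
      = f (pts k j) * g (pts k j) - avgD f k * g (pts k j)
        - avgD g k * f (pts k j) + avgD f k * avgD g k := by
    intro j; unfold ctrD; ring
  have key : ∑ j ∈ Finset.range k, ctrD f k j * ctrD g k j
      = (∑ j ∈ Finset.range k, f (pts k j) * g (pts k j)) - k * (avgD f k * avgD g k) := by
    simp only [expand]
    rw [Finset.sum_add_distrib, Finset.sum_sub_distrib, Finset.sum_sub_distrib,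
      ← Finset.mul_sum, ← Finset.mul_sum, hA, hB, Finset.sum_const, Finset.card_range,
      nsmul_eq_mul]
    ring
  rw [key, sub_div, mul_div_cancel_left₀ _ hkR.ne']
  rfl

lemma ip_ctr (f g : ℝ → ℝ) (hf : ContinuousOn f (Set.Icc (0:ℝ) 1))
    (hg : ContinuousOn g (Set.Icc (0:ℝ) 1)) :
    ip (ctr f) (ctr g) = (∫ t in (0:ℝ)..1, f t * g t)
      - (∫ t in (0:ℝ)..1, f t) * (∫ t in (0:ℝ)..1, g t) := by
  have hu : Set.uIcc (0:ℝ) 1 = Set.Icc 0 1 := Set.uIcc_of_le zero_le_one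
  have hfi : IntervalIntegrable f volume 0 1 := (hu ▸ hf).intervalIntegrable
  have hgi : IntervalIntegrable g volume 0 1 := (hu ▸ hg).intervalIntegrable
  have hfgi : IntervalIntegrable (fun t => f t * g t) volume 0 1 :=
    (hu ▸ (hf.mul hg)).intervalIntegrable
  set F := ∫ t in (0:ℝ)..1, f t with hF
  set G := ∫ t in (0:ℝ)..1, g t with hG
  unfold ip ctr
  have e : ∀ t : ℝ, (f t - F) * (g t - G)
      = f t * g t - G * f t - F * g t + F * G := fun t => by ring
  simp only [← hF, ← hG, e]
  rw [intervalIntegral.integral_add (((hfgi.sub (hfi.const_mul G)).sub (hgi.const_mul F)))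
      intervalIntegrable_const,
    intervalIntegral.integral_sub (hfgi.sub (hfi.const_mul G)) (hgi.const_mul F),
    intervalIntegral.integral_sub hfgi (hfi.const_mul G),
    intervalIntegral.integral_const_mul, intervalIntegral.integral_const_mul,
    intervalIntegral.integral_const]
  simp only [← hF, ← hG, smul_eq_mul]
  ring

theorem shape_index_riemann_convergence (μ y : ℝ → ℝ)
    (hy : ContinuousOn y (Set.Icc (0:ℝ) 1)) (hμ : ContinuousOn μ (Set.Icc (0:ℝ) 1))
    (hyn : 0 < ∫ t in (0:ℝ)..1, (ctr y t)^2)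
    (hμn : 0 < ∫ t in (0:ℝ)..1, (ctr μ t)^2) :
    Tendsto (fun k => 1 - (∑ j ∈ Finset.range k, ctrD y k j * ctrD μ k j) /
        (Real.sqrt (∑ j ∈ Finset.range k, (ctrD y k j)^2) *
          Real.sqrt (∑ j ∈ Finset.range k, (ctrD μ k j)^2)))
      atTop (nhds (IS μ y)) := by
  have hyμ : ContinuousOn (fun t => y t * μ t) (Set.Icc (0:ℝ) 1) := hy.mul hμ
  have hy2 : ContinuousOn (fun t => y t * y t) (Set.Icc (0:ℝ) 1) := hy.mul hy
  have hμ2 : ContinuousOn (fun t => μ t * μ t) (Set.Icc (0:ℝ) 1) := hμ.mul hμ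
  have eY : (∫ t in (0:ℝ)..1, (ctr y t)^2) = ip (ctr y) (ctr y) := by
    unfold ip; simp_rw [pow_two]
  have eM : (∫ t in (0:ℝ)..1, (ctr μ t)^2) = ip (ctr μ) (ctr μ) := by
    unfold ip; simp_rw [pow_two]
  have hA : Tendsto (fun k : ℕ => (∑ j ∈ Finset.range k, ctrD y k j * ctrD μ k j)/(k:ℝ))
      atTop (nhds (ip (ctr y) (ctr μ))) := by
    rw [ip_ctr y μ hy hμ]
    refine Tendsto.congr' ?_
      ((avgD_tendsto _ hyμ).sub ((avgD_tendsto y hy).mul (avgD_tendsto μ hμ)))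
    filter_upwards [eventually_ge_atTop 1] with k hk
    exact (sum_ctrD_mul y μ k hk).symm
  have hB : Tendsto (fun k : ℕ => (∑ j ∈ Finset.range k, (ctrD y k j)^2)/(k:ℝ))
      atTop (nhds (∫ t in (0:ℝ)..1, (ctr y t)^2)) := by
    rw [eY, ip_ctr y y hy hy]
    refine Tendsto.congr' ?_
      ((avgD_tendsto _ hy2).sub ((avgD_tendsto y hy).mul (avgD_tendsto y hy)))
    filter_upwards [eventually_ge_atTop 1] with k hk
    rw [← sum_ctrD_mul y y k hk]
    simp_rw [pow_two]
  have hC : Tendsto (fun k : ℕ => (∑ j ∈ Finset.range k, (ctrD μ k j)^2)/(k:ℝ))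
      atTop (nhds (∫ t in (0:ℝ)..1, (ctr μ t)^2)) := by
    rw [eM, ip_ctr μ μ hμ hμ]
    refine Tendsto.congr' ?_
      ((avgD_tendsto _ hμ2).sub ((avgD_tendsto μ hμ).mul (avgD_tendsto μ hμ)))
    filter_upwards [eventually_ge_atTop 1] with k hk
    rw [← sum_ctrD_mul μ μ k hk]
    simp_rw [pow_two]
  have hden : Real.sqrt (∫ t in (0:ℝ)..1, (ctr y t)^2)
      * Real.sqrt (∫ t in (0:ℝ)..1, (ctr μ t)^2) ≠ 0 :=
    (mul_pos (Real.sqrt_pos.mpr hyn) (Real.sqrt_pos.mpr hμn)).ne'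
  have hfinal : Tendsto (fun k : ℕ => 1 -
      ((∑ j ∈ Finset.range k, ctrD y k j * ctrD μ k j)/(k:ℝ)) /
        (Real.sqrt ((∑ j ∈ Finset.range k, (ctrD y k j)^2)/(k:ℝ)) *
          Real.sqrt ((∑ j ∈ Finset.range k, (ctrD μ k j)^2)/(k:ℝ))))
      atTop (nhds (IS μ y)) := by
    have h2 := (hA.div ((hB.sqrt).mul (hC.sqrt)) hden).const_sub 1
    have h3 : IS μ y = 1 - ip (ctr y) (ctr μ) /
        (Real.sqrt (∫ t in (0:ℝ)..1, (ctr y t)^2) * Real.sqrt (∫ t in (0:ℝ)..1, (ctr μ t)^2)) := rfl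
    rw [h3]
    exact h2
  refine Tendsto.congr' ?_ hfinal
  filter_upwards [eventually_ge_atTop 1] with k hk
  have hkR : (0:ℝ) < k := by exact_mod_cast hk
  set S := ∑ j ∈ Finset.range k, ctrD y k j * ctrD μ k j
  set S1 := ∑ j ∈ Finset.range k, (ctrD y k j)^2 with hS1d
  set S2 := ∑ j ∈ Finset.range k, (ctrD μ k j)^2 with hS2d
  have hS1 : 0 ≤ S1 := Finset.sum_nonneg fun _ _ => sq_nonneg _
  have hS2 : 0 ≤ S2 := Finset.sum_nonneg fun _ _ => sq_nonneg _
  have hk2 : Real.sqrt (k:ℝ) * Real.sqrt (k:ℝ) = (k:ℝ) := Real.mul_self_sqrt hkR.le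
  have hrw : Real.sqrt (S1/(k:ℝ)) * Real.sqrt (S2/(k:ℝ))
      = (Real.sqrt S1 * Real.sqrt S2) / (k:ℝ) := by
    rw [Real.sqrt_div hS1, Real.sqrt_div hS2, div_mul_div_comm, hk2]
  rw [hrw]
  congr 1
  rcases eq_or_ne (Real.sqrt S1 * Real.sqrt S2) 0 with h | h
  · rw [h, zero_div, div_zero, div_zero]
  · field_simp
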